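/- Define w_n = R2_n. Then for all integers n ≥ 9, w satisfies the ninth-order linear recurrence w_n = 8·w_{n-1} - 17·w_{n-2} - 7·w_{n-3} + 41·w_{n-4} + w_{n-5} - 23·w_{n-6} + 3·w_{n-7} + 4·w_{n-8} - w_{n-9} (as an identity of integers). -/
import Mathlib


set_option maxHeartbeats 1000000 in
theorem stmt_11 (r a c d R2 R1 A2 A1 C2 C1 D2 D1 w : ℕ → ℕ)
    (hr : ∀ n : ℕ, 2 ≤ n → r n = r (n - 1) + a n + c n + d n)
    (ha : ∀ n : ℕ, 2 ≤ n → a n = c (n - 1))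
    (hc : ∀ n : ℕ, 2 ≤ n → c n = r (n - 1) + a (n - 1) + d n)
    (hd : ∀ n : ℕ, 2 ≤ n → d n = r (n - 2))
    (ha0 : a 0 = 0) (hc0 : c 0 = 0) (hd0 : d 0 = 0)
    (ha1 : a 1 = 0) (hd1 : d 1 = 0)
    (hr0 : r 0 = 1) (hr1 : r 1 = 2) (hc1 : c 1 = 1)
    (hR2 : ∀ n : ℕ, 2 ≤ n →
      R2 n = (R2 (n - 1) + r (n - 1)) + (A2 n + A1 n) + (C2 n + c n) + (D2 n + d n))
    (hR1 : ∀ n : ℕ, 2 ≤ n →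
      R1 n = r (n - 1) + A1 n + (C1 n + c n) + (D1 n + d n))
    (hA2 : ∀ n : ℕ, 2 ≤ n → A2 n = C2 (n - 1))
    (hA1 : ∀ n : ℕ, 2 ≤ n → A1 n = C1 (n - 1) + c (n - 1))
    (hC2 : ∀ n : ℕ, 2 ≤ n →
      C2 n = (R2 (n - 1) + R1 (n - 1)) + (A2 (n - 1) + A1 (n - 1)) + (D2 n + d n))
    (hC1 : ∀ n : ℕ, 2 ≤ n → C1 n = R1 (n - 1) + A1 (n - 1) + (D1 n + d n))
    (hD2 : ∀ n : ℕ, 2 ≤ n → D2 n = R2 (n - 2) + R1 (n - 2))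
    (hD1 : ∀ n : ℕ, 2 ≤ n → D1 n = R1 (n - 2))
    (hR20 : R2 0 = 1) (hR10 : R1 0 = 1)
    (hA20 : A2 0 = 0) (hA10 : A1 0 = 0) (hC20 : C2 0 = 0) (hC10 : C1 0 = 0)
    (hD20 : D2 0 = 0) (hD10 : D1 0 = 0)
    (hR21 : R2 1 = 5) (hR11 : R1 1 = 3)
    (hA21 : A2 1 = 0) (hA11 : A1 1 = 0) (hC21 : C2 1 = 2) (hC11 : C1 1 = 1)
    (hD21 : D2 1 = 0) (hD11 : D1 1 = 0)
    (hw : ∀ n : ℕ, w n = R2 n) :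
    ∀ n : ℕ, 9 ≤ n →
      (w n : ℤ) = 8 * w (n - 1) - 17 * w (n - 2) - 7 * w (n - 3) + 41 * w (n - 4)
        + w (n - 5) - 23 * w (n - 6) + 3 * w (n - 7) + 4 * w (n - 8) - w (n - 9) := by
  have E : ∀ n : ℕ, 3 ≤ n →
      ((r n : ℤ) = 2 * r (n-1) + 1 * c (n-1) + 2 * r (n-2) + 1 * c (n-2)) ∧
      ((c n : ℤ) = 1 * r (n-1) + 1 * r (n-2) + 1 * c (n-2)) ∧
      ((R2 n : ℤ) = 2 * r (n-1) + 1 * c (n-1) + 2 * R2 (n-1) + 1 * R1 (n-1) + 1 * C2 (n-1) + 1 * C1 (n-1) + 3 * r (n-2) + 2 * c (n-2) + 2 * R2 (n-2) + 2 * R1 (n-2) + 1 * C2 (n-2) + 1 * C1 (n-2)) ∧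
      ((R1 n : ℤ) = 2 * r (n-1) + 1 * c (n-1) + 1 * R1 (n-1) + 1 * C1 (n-1) + 3 * r (n-2) + 2 * c (n-2) + 2 * R1 (n-2) + 1 * C1 (n-2)) ∧
      ((C2 n : ℤ) = 1 * R2 (n-1) + 1 * R1 (n-1) + 1 * r (n-2) + 1 * c (n-2) + 1 * R2 (n-2) + 1 * R1 (n-2) + 1 * C2 (n-2) + 1 * C1 (n-2)) ∧
      ((C1 n : ℤ) = 1 * R1 (n-1) + 1 * r (n-2) + 1 * c (n-2) + 1 * R1 (n-2) + 1 * C1 (n-2)) := by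
    intro n hn
    have h2 : 2 ≤ n := by omega
    have h2' : 2 ≤ n - 1 := by omega
    have hss : n - 1 - 1 = n - 2 := by omega
    have e1 := hr n h2
    have e2 := ha n h2
    have e3 := hc n h2
    have e4 := hd n h2
    have e5 := ha (n-1) h2'
    rw [hss] at e5
    have e6 := hR2 n h2
    have e7 := hR1 n h2
    have e8 := hA2 n h2
    have e9 := hA1 n h2
    have e10 := hC2 n h2
    have e11 := hC1 n h2
    have e12 := hD2 n h2
    have e13 := hD1 n h2
    have e14 := hA2 (n-1) h2'
    have e15 := hA1 (n-1) h2'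
    rw [hss] at e14 e15
    refine ⟨?_, ?_, ?_, ?_, ?_, ?_⟩ <;> push_cast <;> omega

  have key : ∀ n : ℕ, 9 ≤ n → ((r n : ℤ) = 8 * r (n - 1) - 17 * r (n - 2) - 7 * r (n - 3) + 41 * r (n - 4) + 1 * r (n - 5) - 23 * r (n - 6) + 3 * r (n - 7) + 4 * r (n - 8) - 1 * r (n - 9)) ∧
      ((c n : ℤ) = 8 * c (n - 1) - 17 * c (n - 2) - 7 * c (n - 3) + 41 * c (n - 4) + 1 * c (n - 5) - 23 * c (n - 6) + 3 * c (n - 7) + 4 * c (n - 8) - 1 * c (n - 9)) ∧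
      ((R2 n : ℤ) = 8 * R2 (n - 1) - 17 * R2 (n - 2) - 7 * R2 (n - 3) + 41 * R2 (n - 4) + 1 * R2 (n - 5) - 23 * R2 (n - 6) + 3 * R2 (n - 7) + 4 * R2 (n - 8) - 1 * R2 (n - 9)) ∧
      ((R1 n : ℤ) = 8 * R1 (n - 1) - 17 * R1 (n - 2) - 7 * R1 (n - 3) + 41 * R1 (n - 4) + 1 * R1 (n - 5) - 23 * R1 (n - 6) + 3 * R1 (n - 7) + 4 * R1 (n - 8) - 1 * R1 (n - 9)) ∧
      ((C2 n : ℤ) = 8 * C2 (n - 1) - 17 * C2 (n - 2) - 7 * C2 (n - 3) + 41 * C2 (n - 4) + 1 * C2 (n - 5) - 23 * C2 (n - 6) + 3 * C2 (n - 7) + 4 * C2 (n - 8) - 1 * C2 (n - 9)) ∧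
      ((C1 n : ℤ) = 8 * C1 (n - 1) - 17 * C1 (n - 2) - 7 * C1 (n - 3) + 41 * C1 (n - 4) + 1 * C1 (n - 5) - 23 * C1 (n - 6) + 3 * C1 (n - 7) + 4 * C1 (n - 8) - 1 * C1 (n - 9)) := by
    intro n
    induction n using Nat.strong_induction_on with
    | _ n ih =>
      intro hn
      rcases Nat.lt_or_ge n 12 with hlt | hge
      ·
        have hd_2 : d 2 = 1 := by rw [hd 2 (by norm_num)]; norm_num [hr0]
        have ha_2 : a 2 = 1 := by rw [ha 2 (by norm_num)]; norm_num [hc1]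
        have hc_2 : c 2 = 3 := by rw [hc 2 (by norm_num)]; norm_num [hr1, ha1, hd_2]
        have hr_2 : r 2 = 7 := by rw [hr 2 (by norm_num)]; norm_num [hr1, ha_2, hc_2, hd_2]
        have hD2_2 : D2 2 = 2 := by rw [hD2 2 (by norm_num)]; norm_num [hR20, hR10]
        have hD1_2 : D1 2 = 1 := by rw [hD1 2 (by norm_num)]; norm_num [hR10]
        have hA2_2 : A2 2 = 2 := by rw [hA2 2 (by norm_num)]; norm_num [hC21]
        have hA1_2 : A1 2 = 2 := by rw [hA1 2 (by norm_num)]; norm_num [hC11, hc1]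
        have hC1_2 : C1 2 = 5 := by rw [hC1 2 (by norm_num)]; norm_num [hR11, hA11, hD1_2, hd_2]
        have hC2_2 : C2 2 = 11 := by rw [hC2 2 (by norm_num)]; norm_num [hR21, hR11, hA21, hA11, hD2_2, hd_2]
        have hR1_2 : R1 2 = 14 := by rw [hR1 2 (by norm_num)]; norm_num [hr1, hA1_2, hC1_2, hc_2, hD1_2, hd_2]
        have hR2_2 : R2 2 = 28 := by rw [hR2 2 (by norm_num)]; norm_num [hR21, hr1, hA2_2, hA1_2, hC2_2, hc_2, hD2_2, hd_2]
        have hd_3 : d 3 = 2 := by rw [hd 3 (by norm_num)]; norm_num [hr1]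
        have ha_3 : a 3 = 3 := by rw [ha 3 (by norm_num)]; norm_num [hc_2]
        have hc_3 : c 3 = 10 := by rw [hc 3 (by norm_num)]; norm_num [hr_2, ha_2, hd_3]
        have hr_3 : r 3 = 22 := by rw [hr 3 (by norm_num)]; norm_num [hr_2, ha_3, hc_3, hd_3]
        have hD2_3 : D2 3 = 8 := by rw [hD2 3 (by norm_num)]; norm_num [hR21, hR11]
        have hD1_3 : D1 3 = 3 := by rw [hD1 3 (by norm_num)]; norm_num [hR11]
        have hA2_3 : A2 3 = 11 := by rw [hA2 3 (by norm_num)]; norm_num [hC2_2]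
        have hA1_3 : A1 3 = 8 := by rw [hA1 3 (by norm_num)]; norm_num [hC1_2, hc_2]
        have hC1_3 : C1 3 = 21 := by rw [hC1 3 (by norm_num)]; norm_num [hR1_2, hA1_2, hD1_3, hd_3]
        have hC2_3 : C2 3 = 56 := by rw [hC2 3 (by norm_num)]; norm_num [hR2_2, hR1_2, hA2_2, hA1_2, hD2_3, hd_3]
        have hR1_3 : R1 3 = 51 := by rw [hR1 3 (by norm_num)]; norm_num [hr_2, hA1_3, hC1_3, hc_3, hD1_3, hd_3]
        have hR2_3 : R2 3 = 130 := by rw [hR2 3 (by norm_num)]; norm_num [hR2_2, hr_2, hA2_3, hA1_3, hC2_3, hc_3, hD2_3, hd_3]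
        have hd_4 : d 4 = 7 := by rw [hd 4 (by norm_num)]; norm_num [hr_2]
        have ha_4 : a 4 = 10 := by rw [ha 4 (by norm_num)]; norm_num [hc_3]
        have hc_4 : c 4 = 32 := by rw [hc 4 (by norm_num)]; norm_num [hr_3, ha_3, hd_4]
        have hr_4 : r 4 = 71 := by rw [hr 4 (by norm_num)]; norm_num [hr_3, ha_4, hc_4, hd_4]
        have hD2_4 : D2 4 = 42 := by rw [hD2 4 (by norm_num)]; norm_num [hR2_2, hR1_2]
        have hD1_4 : D1 4 = 14 := by rw [hD1 4 (by norm_num)]; norm_num [hR1_2]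
        have hA2_4 : A2 4 = 56 := by rw [hA2 4 (by norm_num)]; norm_num [hC2_3]
        have hA1_4 : A1 4 = 31 := by rw [hA1 4 (by norm_num)]; norm_num [hC1_3, hc_3]
        have hC1_4 : C1 4 = 80 := by rw [hC1 4 (by norm_num)]; norm_num [hR1_3, hA1_3, hD1_4, hd_4]
        have hC2_4 : C2 4 = 249 := by rw [hC2 4 (by norm_num)]; norm_num [hR2_3, hR1_3, hA2_3, hA1_3, hD2_4, hd_4]
        have hR1_4 : R1 4 = 186 := by rw [hR1 4 (by norm_num)]; norm_num [hr_3, hA1_4, hC1_4, hc_4, hD1_4, hd_4]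
        have hR2_4 : R2 4 = 569 := by rw [hR2 4 (by norm_num)]; norm_num [hR2_3, hr_3, hA2_4, hA1_4, hC2_4, hc_4, hD2_4, hd_4]
        have hd_5 : d 5 = 22 := by rw [hd 5 (by norm_num)]; norm_num [hr_3]
        have ha_5 : a 5 = 32 := by rw [ha 5 (by norm_num)]; norm_num [hc_4]
        have hc_5 : c 5 = 103 := by rw [hc 5 (by norm_num)]; norm_num [hr_4, ha_4, hd_5]
        have hr_5 : r 5 = 228 := by rw [hr 5 (by norm_num)]; norm_num [hr_4, ha_5, hc_5, hd_5]
        have hD2_5 : D2 5 = 181 := by rw [hD2 5 (by norm_num)]; norm_num [hR2_3, hR1_3]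
        have hD1_5 : D1 5 = 51 := by rw [hD1 5 (by norm_num)]; norm_num [hR1_3]
        have hA2_5 : A2 5 = 249 := by rw [hA2 5 (by norm_num)]; norm_num [hC2_4]
        have hA1_5 : A1 5 = 112 := by rw [hA1 5 (by norm_num)]; norm_num [hC1_4, hc_4]
        have hC1_5 : C1 5 = 290 := by rw [hC1 5 (by norm_num)]; norm_num [hR1_4, hA1_4, hD1_5, hd_5]
        have hC2_5 : C2 5 = 1045 := by rw [hC2 5 (by norm_num)]; norm_num [hR2_4, hR1_4, hA2_4, hA1_4, hD2_5, hd_5]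
        have hR1_5 : R1 5 = 649 := by rw [hR1 5 (by norm_num)]; norm_num [hr_4, hA1_5, hC1_5, hc_5, hD1_5, hd_5]
        have hR2_5 : R2 5 = 2352 := by rw [hR2 5 (by norm_num)]; norm_num [hR2_4, hr_4, hA2_5, hA1_5, hC2_5, hc_5, hD2_5, hd_5]
        have hd_6 : d 6 = 71 := by rw [hd 6 (by norm_num)]; norm_num [hr_4]
        have ha_6 : a 6 = 103 := by rw [ha 6 (by norm_num)]; norm_num [hc_5]
        have hc_6 : c 6 = 331 := by rw [hc 6 (by norm_num)]; norm_num [hr_5, ha_5, hd_6]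
        have hr_6 : r 6 = 733 := by rw [hr 6 (by norm_num)]; norm_num [hr_5, ha_6, hc_6, hd_6]
        have hD2_6 : D2 6 = 755 := by rw [hD2 6 (by norm_num)]; norm_num [hR2_4, hR1_4]
        have hD1_6 : D1 6 = 186 := by rw [hD1 6 (by norm_num)]; norm_num [hR1_4]
        have hA2_6 : A2 6 = 1045 := by rw [hA2 6 (by norm_num)]; norm_num [hC2_5]
        have hA1_6 : A1 6 = 393 := by rw [hA1 6 (by norm_num)]; norm_num [hC1_5, hc_5]
        have hC1_6 : C1 6 = 1018 := by rw [hC1 6 (by norm_num)]; norm_num [hR1_5, hA1_5, hD1_6, hd_6]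
        have hC2_6 : C2 6 = 4188 := by rw [hC2 6 (by norm_num)]; norm_num [hR2_5, hR1_5, hA2_5, hA1_5, hD2_6, hd_6]
        have hR1_6 : R1 6 = 2227 := by rw [hR1 6 (by norm_num)]; norm_num [hr_5, hA1_6, hC1_6, hc_6, hD1_6, hd_6]
        have hR2_6 : R2 6 = 9363 := by rw [hR2 6 (by norm_num)]; norm_num [hR2_5, hr_5, hA2_6, hA1_6, hC2_6, hc_6, hD2_6, hd_6]
        have hd_7 : d 7 = 228 := by rw [hd 7 (by norm_num)]; norm_num [hr_5]
        have ha_7 : a 7 = 331 := by rw [ha 7 (by norm_num)]; norm_num [hc_6]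
        have hc_7 : c 7 = 1064 := by rw [hc 7 (by norm_num)]; norm_num [hr_6, ha_6, hd_7]
        have hr_7 : r 7 = 2356 := by rw [hr 7 (by norm_num)]; norm_num [hr_6, ha_7, hc_7, hd_7]
        have hD2_7 : D2 7 = 3001 := by rw [hD2 7 (by norm_num)]; norm_num [hR2_5, hR1_5]
        have hD1_7 : D1 7 = 649 := by rw [hD1 7 (by norm_num)]; norm_num [hR1_5]
        have hA2_7 : A2 7 = 4188 := by rw [hA2 7 (by norm_num)]; norm_num [hC2_6]
        have hA1_7 : A1 7 = 1349 := by rw [hA1 7 (by norm_num)]; norm_num [hC1_6, hc_6]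
        have hC1_7 : C1 7 = 3497 := by rw [hC1 7 (by norm_num)]; norm_num [hR1_6, hA1_6, hD1_7, hd_7]
        have hC2_7 : C2 7 = 16257 := by rw [hC2 7 (by norm_num)]; norm_num [hR2_6, hR1_6, hA2_6, hA1_6, hD2_7, hd_7]
        have hR1_7 : R1 7 = 7520 := by rw [hR1 7 (by norm_num)]; norm_num [hr_6, hA1_7, hC1_7, hc_7, hD1_7, hd_7]
        have hR2_7 : R2 7 = 36183 := by rw [hR2 7 (by norm_num)]; norm_num [hR2_6, hr_6, hA2_7, hA1_7, hC2_7, hc_7, hD2_7, hd_7]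
        have hd_8 : d 8 = 733 := by rw [hd 8 (by norm_num)]; norm_num [hr_6]
        have ha_8 : a 8 = 1064 := by rw [ha 8 (by norm_num)]; norm_num [hc_7]
        have hc_8 : c 8 = 3420 := by rw [hc 8 (by norm_num)]; norm_num [hr_7, ha_7, hd_8]
        have hr_8 : r 8 = 7573 := by rw [hr 8 (by norm_num)]; norm_num [hr_7, ha_8, hc_8, hd_8]
        have hD2_8 : D2 8 = 11590 := by rw [hD2 8 (by norm_num)]; norm_num [hR2_6, hR1_6]
        have hD1_8 : D1 8 = 2227 := by rw [hD1 8 (by norm_num)]; norm_num [hR1_6]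
        have hA2_8 : A2 8 = 16257 := by rw [hA2 8 (by norm_num)]; norm_num [hC2_7]
        have hA1_8 : A1 8 = 4561 := by rw [hA1 8 (by norm_num)]; norm_num [hC1_7, hc_7]
        have hC1_8 : C1 8 = 11829 := by rw [hC1 8 (by norm_num)]; norm_num [hR1_7, hA1_7, hD1_8, hd_8]
        have hC2_8 : C2 8 = 61563 := by rw [hC2 8 (by norm_num)]; norm_num [hR2_7, hR1_7, hA2_7, hA1_7, hD2_8, hd_8]
        have hR1_8 : R1 8 = 25126 := by rw [hR1 8 (by norm_num)]; norm_num [hr_7, hA1_8, hC1_8, hc_8, hD1_8, hd_8]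
        have hR2_8 : R2 8 = 136663 := by rw [hR2 8 (by norm_num)]; norm_num [hR2_7, hr_7, hA2_8, hA1_8, hC2_8, hc_8, hD2_8, hd_8]
        have hd_9 : d 9 = 2356 := by rw [hd 9 (by norm_num)]; norm_num [hr_7]
        have ha_9 : a 9 = 3420 := by rw [ha 9 (by norm_num)]; norm_num [hc_8]
        have hc_9 : c 9 = 10993 := by rw [hc 9 (by norm_num)]; norm_num [hr_8, ha_8, hd_9]
        have hr_9 : r 9 = 24342 := by rw [hr 9 (by norm_num)]; norm_num [hr_8, ha_9, hc_9, hd_9]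
        have hD2_9 : D2 9 = 43703 := by rw [hD2 9 (by norm_num)]; norm_num [hR2_7, hR1_7]
        have hD1_9 : D1 9 = 7520 := by rw [hD1 9 (by norm_num)]; norm_num [hR1_7]
        have hA2_9 : A2 9 = 61563 := by rw [hA2 9 (by norm_num)]; norm_num [hC2_8]
        have hA1_9 : A1 9 = 15249 := by rw [hA1 9 (by norm_num)]; norm_num [hC1_8, hc_8]
        have hC1_9 : C1 9 = 39563 := by rw [hC1 9 (by norm_num)]; norm_num [hR1_8, hA1_8, hD1_9, hd_9]
        have hC2_9 : C2 9 = 228666 := by rw [hC2 9 (by norm_num)]; norm_num [hR2_8, hR1_8, hA2_8, hA1_8, hD2_9, hd_9]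
        have hR1_9 : R1 9 = 83254 := by rw [hR1 9 (by norm_num)]; norm_num [hr_8, hA1_9, hC1_9, hc_9, hD1_9, hd_9]
        have hR2_9 : R2 9 = 506766 := by rw [hR2 9 (by norm_num)]; norm_num [hR2_8, hr_8, hA2_9, hA1_9, hC2_9, hc_9, hD2_9, hd_9]
        have hd_10 : d 10 = 7573 := by rw [hd 10 (by norm_num)]; norm_num [hr_8]
        have ha_10 : a 10 = 10993 := by rw [ha 10 (by norm_num)]; norm_num [hc_9]
        have hc_10 : c 10 = 35335 := by rw [hc 10 (by norm_num)]; norm_num [hr_9, ha_9, hd_10]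
        have hr_10 : r 10 = 78243 := by rw [hr 10 (by norm_num)]; norm_num [hr_9, ha_10, hc_10, hd_10]
        have hD2_10 : D2 10 = 161789 := by rw [hD2 10 (by norm_num)]; norm_num [hR2_8, hR1_8]
        have hD1_10 : D1 10 = 25126 := by rw [hD1 10 (by norm_num)]; norm_num [hR1_8]
        have hA2_10 : A2 10 = 228666 := by rw [hA2 10 (by norm_num)]; norm_num [hC2_9]
        have hA1_10 : A1 10 = 50556 := by rw [hA1 10 (by norm_num)]; norm_num [hC1_9, hc_9]
        have hC1_10 : C1 10 = 131202 := by rw [hC1 10 (by norm_num)]; norm_num [hR1_9, hA1_9, hD1_10, hd_10]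
        have hC2_10 : C2 10 = 836194 := by rw [hC2 10 (by norm_num)]; norm_num [hR2_9, hR1_9, hA2_9, hA1_9, hD2_10, hd_10]
        have hR1_10 : R1 10 = 274134 := by rw [hR1 10 (by norm_num)]; norm_num [hr_9, hA1_10, hC1_10, hc_10, hD1_10, hd_10]
        have hR2_10 : R2 10 = 1851221 := by rw [hR2 10 (by norm_num)]; norm_num [hR2_9, hr_9, hA2_10, hA1_10, hC2_10, hc_10, hD2_10, hd_10]
        have hd_11 : d 11 = 24342 := by rw [hd 11 (by norm_num)]; norm_num [hr_9]
        have ha_11 : a 11 = 35335 := by rw [ha 11 (by norm_num)]; norm_num [hc_10]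
        have hc_11 : c 11 = 113578 := by rw [hc 11 (by norm_num)]; norm_num [hr_10, ha_10, hd_11]
        have hr_11 : r 11 = 251498 := by rw [hr 11 (by norm_num)]; norm_num [hr_10, ha_11, hc_11, hd_11]
        have hD2_11 : D2 11 = 590020 := by rw [hD2 11 (by norm_num)]; norm_num [hR2_9, hR1_9]
        have hD1_11 : D1 11 = 83254 := by rw [hD1 11 (by norm_num)]; norm_num [hR1_9]
        have hA2_11 : A2 11 = 836194 := by rw [hA2 11 (by norm_num)]; norm_num [hC2_10]
        have hA1_11 : A1 11 = 166537 := by rw [hA1 11 (by norm_num)]; norm_num [hC1_10, hc_10]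
        have hC1_11 : C1 11 = 432286 := by rw [hC1 11 (by norm_num)]; norm_num [hR1_10, hA1_10, hD1_11, hd_11]
        have hC2_11 : C2 11 = 3018939 := by rw [hC2 11 (by norm_num)]; norm_num [hR2_10, hR1_10, hA2_10, hA1_10, hD2_11, hd_11]
        have hR1_11 : R1 11 = 898240 := by rw [hR1 11 (by norm_num)]; norm_num [hr_10, hA1_11, hC1_11, hc_11, hD1_11, hd_11]
        have hR2_11 : R2 11 = 6679074 := by rw [hR2 11 (by norm_num)]; norm_num [hR2_10, hr_10, hA2_11, hA1_11, hC2_11, hc_11, hD2_11, hd_11]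
        have h912 : n = 9 ∨ n = 10 ∨ n = 11 := by omega
        rcases h912 with rfl | rfl | rfl
        · refine ⟨?_, ?_, ?_, ?_, ?_, ?_⟩ <;> norm_num [hr0, hr1, hr_2, hr_3, hr_4, hr_5, hr_6, hr_7, hr_8, hr_9, hc0, hc1, hc_2, hc_3, hc_4, hc_5, hc_6, hc_7, hc_8, hc_9, hR20, hR21, hR2_2, hR2_3, hR2_4, hR2_5, hR2_6, hR2_7, hR2_8, hR2_9, hR10, hR11, hR1_2, hR1_3, hR1_4, hR1_5, hR1_6, hR1_7, hR1_8, hR1_9, hC20, hC21, hC2_2, hC2_3, hC2_4, hC2_5, hC2_6, hC2_7, hC2_8, hC2_9, hC10, hC11, hC1_2, hC1_3, hC1_4, hC1_5, hC1_6, hC1_7, hC1_8, hC1_9]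
        · refine ⟨?_, ?_, ?_, ?_, ?_, ?_⟩ <;> norm_num [hr1, hr_2, hr_3, hr_4, hr_5, hr_6, hr_7, hr_8, hr_9, hr_10, hc1, hc_2, hc_3, hc_4, hc_5, hc_6, hc_7, hc_8, hc_9, hc_10, hR21, hR2_2, hR2_3, hR2_4, hR2_5, hR2_6, hR2_7, hR2_8, hR2_9, hR2_10, hR11, hR1_2, hR1_3, hR1_4, hR1_5, hR1_6, hR1_7, hR1_8, hR1_9, hR1_10, hC21, hC2_2, hC2_3, hC2_4, hC2_5, hC2_6, hC2_7, hC2_8, hC2_9, hC2_10, hC11, hC1_2, hC1_3, hC1_4, hC1_5, hC1_6, hC1_7, hC1_8, hC1_9, hC1_10]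
        · refine ⟨?_, ?_, ?_, ?_, ?_, ?_⟩ <;> norm_num [hr_2, hr_3, hr_4, hr_5, hr_6, hr_7, hr_8, hr_9, hr_10, hr_11, hc_2, hc_3, hc_4, hc_5, hc_6, hc_7, hc_8, hc_9, hc_10, hc_11, hR2_2, hR2_3, hR2_4, hR2_5, hR2_6, hR2_7, hR2_8, hR2_9, hR2_10, hR2_11, hR1_2, hR1_3, hR1_4, hR1_5, hR1_6, hR1_7, hR1_8, hR1_9, hR1_10, hR1_11, hC2_2, hC2_3, hC2_4, hC2_5, hC2_6, hC2_7, hC2_8, hC2_9, hC2_10, hC2_11, hC1_2, hC1_3, hC1_4, hC1_5, hC1_6, hC1_7, hC1_8, hC1_9, hC1_10, hC1_11]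
      · have ih1 := ih (n-1) (Nat.sub_lt (lt_of_lt_of_le (by norm_num) hge) (by norm_num)) (Nat.le_sub_of_add_le (le_trans (by norm_num) hge))
        have ih2 := ih (n-2) (Nat.sub_lt (lt_of_lt_of_le (by norm_num) hge) (by norm_num)) (Nat.le_sub_of_add_le (le_trans (by norm_num) hge))
        rw [show n - 1 - 1 = n - 2 from Nat.sub_sub n 1 1, show n - 1 - 2 = n - 3 from Nat.sub_sub n 1 2, show n - 1 - 3 = n - 4 from Nat.sub_sub n 1 3, show n - 1 - 4 = n - 5 from Nat.sub_sub n 1 4, show n - 1 - 5 = n - 6 from Nat.sub_sub n 1 5, show n - 1 - 6 = n - 7 from Nat.sub_sub n 1 6, show n - 1 - 7 = n - 8 from Nat.sub_sub n 1 7, show n - 1 - 8 = n - 9 from Nat.sub_sub n 1 8, show n - 1 - 9 = n - 10 from Nat.sub_sub n 1 9] at ih1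
        rw [show n - 2 - 1 = n - 3 from Nat.sub_sub n 2 1, show n - 2 - 2 = n - 4 from Nat.sub_sub n 2 2, show n - 2 - 3 = n - 5 from Nat.sub_sub n 2 3, show n - 2 - 4 = n - 6 from Nat.sub_sub n 2 4, show n - 2 - 5 = n - 7 from Nat.sub_sub n 2 5, show n - 2 - 6 = n - 8 from Nat.sub_sub n 2 6, show n - 2 - 7 = n - 9 from Nat.sub_sub n 2 7, show n - 2 - 8 = n - 10 from Nat.sub_sub n 2 8, show n - 2 - 9 = n - 11 from Nat.sub_sub n 2 9] at ih2
        obtain ⟨ih1r, ih1c, ih1R2, ih1R1, ih1C2, ih1C1⟩ := ih1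
        obtain ⟨ih2r, ih2c, ih2R2, ih2R1, ih2C2, ih2C1⟩ := ih2
        have E0 := E n (le_trans (by norm_num) hge)
        obtain ⟨e0r, e0c, e0R2, e0R1, e0C2, e0C1⟩ := E0
        have E1 := E (n - 1) (Nat.le_sub_of_add_le (le_trans (by norm_num) hge))
        rw [show n - 1 - 1 = n - 2 from Nat.sub_sub n 1 1, show n - 1 - 2 = n - 3 from Nat.sub_sub n 1 2] at E1
        obtain ⟨e1r, e1c, e1R2, e1R1, e1C2, e1C1⟩ := E1
        have E2 := E (n - 2) (Nat.le_sub_of_add_le (le_trans (by norm_num) hge))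
        rw [show n - 2 - 1 = n - 3 from Nat.sub_sub n 2 1, show n - 2 - 2 = n - 4 from Nat.sub_sub n 2 2] at E2
        obtain ⟨e2r, e2c, e2R2, e2R1, e2C2, e2C1⟩ := E2
        have E3 := E (n - 3) (Nat.le_sub_of_add_le (le_trans (by norm_num) hge))
        rw [show n - 3 - 1 = n - 4 from Nat.sub_sub n 3 1, show n - 3 - 2 = n - 5 from Nat.sub_sub n 3 2] at E3
        obtain ⟨e3r, e3c, e3R2, e3R1, e3C2, e3C1⟩ := E3
        have E4 := E (n - 4) (Nat.le_sub_of_add_le (le_trans (by norm_num) hge))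
        rw [show n - 4 - 1 = n - 5 from Nat.sub_sub n 4 1, show n - 4 - 2 = n - 6 from Nat.sub_sub n 4 2] at E4
        obtain ⟨e4r, e4c, e4R2, e4R1, e4C2, e4C1⟩ := E4
        have E5 := E (n - 5) (Nat.le_sub_of_add_le (le_trans (by norm_num) hge))
        rw [show n - 5 - 1 = n - 6 from Nat.sub_sub n 5 1, show n - 5 - 2 = n - 7 from Nat.sub_sub n 5 2] at E5
        obtain ⟨e5r, e5c, e5R2, e5R1, e5C2, e5C1⟩ := E5
        have E6 := E (n - 6) (Nat.le_sub_of_add_le (le_trans (by norm_num) hge))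
        rw [show n - 6 - 1 = n - 7 from Nat.sub_sub n 6 1, show n - 6 - 2 = n - 8 from Nat.sub_sub n 6 2] at E6
        obtain ⟨e6r, e6c, e6R2, e6R1, e6C2, e6C1⟩ := E6
        have E7 := E (n - 7) (Nat.le_sub_of_add_le (le_trans (by norm_num) hge))
        rw [show n - 7 - 1 = n - 8 from Nat.sub_sub n 7 1, show n - 7 - 2 = n - 9 from Nat.sub_sub n 7 2] at E7
        obtain ⟨e7r, e7c, e7R2, e7R1, e7C2, e7C1⟩ := E7
        have E8 := E (n - 8) (Nat.le_sub_of_add_le (le_trans (by norm_num) hge))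
        rw [show n - 8 - 1 = n - 9 from Nat.sub_sub n 8 1, show n - 8 - 2 = n - 10 from Nat.sub_sub n 8 2] at E8
        obtain ⟨e8r, e8c, e8R2, e8R1, e8C2, e8C1⟩ := E8
        have E9 := E (n - 9) (Nat.le_sub_of_add_le (le_trans (by norm_num) hge))
        rw [show n - 9 - 1 = n - 10 from Nat.sub_sub n 9 1, show n - 9 - 2 = n - 11 from Nat.sub_sub n 9 2] at E9
        obtain ⟨e9r, e9c, e9R2, e9R1, e9C2, e9C1⟩ := E9
        refine ⟨?_, ?_, ?_, ?_, ?_, ?_⟩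
        · linear_combination e0r - 8 * e1r + 17 * e2r + 7 * e3r - 41 * e4r - 1 * e5r + 23 * e6r - 3 * e7r - 4 * e8r + 1 * e9r + 2 * ih1r + 1 * ih1c + 2 * ih2r + 1 * ih2c
        · linear_combination e0c - 8 * e1c + 17 * e2c + 7 * e3c - 41 * e4c - 1 * e5c + 23 * e6c - 3 * e7c - 4 * e8c + 1 * e9c + 1 * ih1r + 1 * ih2r + 1 * ih2c
        · linear_combination e0R2 - 8 * e1R2 + 17 * e2R2 + 7 * e3R2 - 41 * e4R2 - 1 * e5R2 + 23 * e6R2 - 3 * e7R2 - 4 * e8R2 + 1 * e9R2 + 2 * ih1r + 1 * ih1c + 2 * ih1R2 + 1 * ih1R1 + 1 * ih1C2 + 1 * ih1C1 + 3 * ih2r + 2 * ih2c + 2 * ih2R2 + 2 * ih2R1 + 1 * ih2C2 + 1 * ih2C1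
        · linear_combination e0R1 - 8 * e1R1 + 17 * e2R1 + 7 * e3R1 - 41 * e4R1 - 1 * e5R1 + 23 * e6R1 - 3 * e7R1 - 4 * e8R1 + 1 * e9R1 + 2 * ih1r + 1 * ih1c + 1 * ih1R1 + 1 * ih1C1 + 3 * ih2r + 2 * ih2c + 2 * ih2R1 + 1 * ih2C1
        · linear_combination e0C2 - 8 * e1C2 + 17 * e2C2 + 7 * e3C2 - 41 * e4C2 - 1 * e5C2 + 23 * e6C2 - 3 * e7C2 - 4 * e8C2 + 1 * e9C2 + 1 * ih1R2 + 1 * ih1R1 + 1 * ih2r + 1 * ih2c + 1 * ih2R2 + 1 * ih2R1 + 1 * ih2C2 + 1 * ih2C1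
        · linear_combination e0C1 - 8 * e1C1 + 17 * e2C1 + 7 * e3C1 - 41 * e4C1 - 1 * e5C1 + 23 * e6C1 - 3 * e7C1 - 4 * e8C1 + 1 * e9C1 + 1 * ih1R1 + 1 * ih2r + 1 * ih2c + 1 * ih2R1 + 1 * ih2C1
  intro n hn
  simp only [hw]
  have h := (key n hn).2.2.1
  linarith
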